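/- Let m and n be positive integers and N = 2^(n+1)·(2m+1). Then N has at least one representation as a sum of r ≥ 2 successive odd positive numbers and at least one representation as a sum of r ≥ 2 successive even positive numbers. -/

import Mathlib

lemma sum_arith (r a : ℕ) : ∑ i ∈ Finset.range r, (a + 2 * i) = r * a + r * (r - 1) := by
  induction r with
  | zero => simp
  | succ k ih =>
    rw [Finset.sum_range_succ, ih]
    rcases k with _ | j
    · simp
    · simp only [Nat.succ_sub_one]
      ring

/-- Every number of the form 2^(n+1)·(2m+1) with m, n ≥ 1 is a sum of r ≥ 2
successive odd positive numbers and also a sum of r ≥ 2 successive even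
positive numbers. -/
theorem mixed_form_has_both_sums (m n : ℕ) (hm : 0 < m) (hn : 0 < n) :
    (∃ r a : ℕ, 2 ≤ r ∧ 0 < a ∧ Odd a ∧
      2 ^ (n + 1) * (2 * m + 1) = ∑ i ∈ Finset.range r, (a + 2 * i)) ∧
    (∃ r a : ℕ, 2 ≤ r ∧ 0 < a ∧ Even a ∧
      2 ^ (n + 1) * (2 * m + 1) = ∑ i ∈ Finset.range r, (a + 2 * i)) := by
  have hpow : 2 ≤ 2 ^ n := by
    calc 2 = 2 ^ 1 := by norm_num
    _ ≤ 2 ^ n := Nat.pow_le_pow_right (by norm_num) hn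
  constructor
  · refine ⟨2, 2 ^ n * (2 * m + 1) - 1, le_refl 2, ?_, ?_, ?_⟩
    · have : 2 ≤ 2 ^ n * (2 * m + 1) := le_trans hpow (Nat.le_mul_of_pos_right _ (by omega))
      omega
    · have he : Even (2 ^ n * (2 * m + 1)) := by
        have : Even (2 ^ n) := (Nat.even_pow).2 ⟨even_two, by omega⟩
        exact this.mul_right _
      have h2 : 2 ≤ 2 ^ n * (2 * m + 1) := le_trans hpow (Nat.le_mul_of_pos_right _ (by omega))
      rcases he with ⟨k, hk⟩
      exact ⟨k - 1, by omega⟩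
    · rw [sum_arith]
      have h2 : 2 ≤ 2 ^ n * (2 * m + 1) := le_trans hpow (Nat.le_mul_of_pos_right _ (by omega))
      have : 2 ^ (n + 1) * (2 * m + 1) = 2 * (2 ^ n * (2 * m + 1)) := by ring
      omega
  · by_cases h : 2 * m < 2 ^ (n + 1)
    · refine ⟨2 * m + 1, 2 ^ (n + 1) - 2 * m, by omega, by omega, ?_, ?_⟩
      · have he : Even (2 ^ (n + 1)) := (Nat.even_pow).2 ⟨even_two, by omega⟩
        rcases he with ⟨k, hk⟩
        exact ⟨k - m, by omega⟩
      · rw [sum_arith]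
        have : (2 * m + 1) * (2 ^ (n + 1) - 2 * m) + (2 * m + 1) * (2 * m + 1 - 1)
            = (2 * m + 1) * (2 ^ (n + 1) - 2 * m + 2 * m) := by
          rw [Nat.mul_add]; congr 1
        rw [this, Nat.sub_add_cancel (by omega), Nat.mul_comm]
    · refine ⟨2 ^ (n + 1), 2 * m + 2 - 2 ^ (n + 1), by
        have : (2:ℕ) ^ (n+1) = 2 * 2 ^ n := by ring
        omega, by omega, ?_, ?_⟩
      · have he : Even (2 ^ (n + 1)) := (Nat.even_pow).2 ⟨even_two, by omega⟩
        rcases he with ⟨k, hk⟩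
        exact ⟨m + 1 - k, by omega⟩
      · rw [sum_arith]
        have : 2 ^ (n+1) * (2 * m + 2 - 2 ^ (n+1)) + 2 ^ (n+1) * (2 ^ (n+1) - 1)
            = 2 ^ (n+1) * (2 * m + 2 - 2 ^ (n+1) + (2 ^ (n+1) - 1)) := by rw [Nat.mul_add]
        rw [this]; congr 1; omega
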